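/- For any two vectors u, v in U^K, the minimum over all vectors w in U^K with marg w = marg v of the number of coordinates k where w_k ≠ u_k equals K · d(marg u, marg v), where d is the total variation distance (sum of positive parts of differences) on empirical distributions. -/
import Mathlib

open Finset

noncomputable def marg {U : Type*} [Fintype U] [DecidableEq U] {K : ℕ} (w : Fin K → U) (x : U) : ℚ :=
  ((Finset.univ.filter fun k => w k = x).card : ℚ) / K

noncomputable def tv {U : Type*} [Fintype U] (Q Q' : U → ℚ) : ℚ :=
  ∑ x : U, max (Q x - Q' x) 0

section Aux

variable {U : Type*} [Fintype U] [DecidableEq U] {K : ℕ}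

/-- count of a value in a vector -/
def cnt (w : Fin K → U) (x : U) : ℕ := (Finset.univ.filter fun k => w k = x).card

lemma sum_cnt (w : Fin K → U) : ∑ x : U, cnt w x = K := by
  classical
  have := Finset.card_eq_sum_card_fiberwise (s := (Finset.univ : Finset (Fin K)))
    (t := (Finset.univ : Finset U)) (f := w) (fun a _ => Finset.mem_univ _)
  simpa [cnt] using this.symm

lemma marg_def (w : Fin K → U) (x : U) : marg w x = (cnt w x : ℚ) / K := rfl

lemma cnt_eq_of_marg (hK : 0 < K) {w v : Fin K → U} (h : marg w = marg v) (x : U) :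
    cnt w x = cnt v x := by
  have h1 := congrFun h x
  rw [marg_def, marg_def, div_eq_div_iff (by positivity) (by positivity)] at h1
  have hKQ : (K : ℚ) ≠ 0 := by positivity
  exact_mod_cast mul_right_cancel₀ hKQ h1

lemma tv_cnt (hK : 0 < K) (u v : Fin K → U) :
    (K : ℚ) * tv (marg u) (marg v) = ((∑ x : U, (cnt u x - cnt v x) : ℕ) : ℚ) := by
  unfold tv
  have hKQ : (0:ℚ) < K := by exact_mod_cast hK
  rw [Finset.mul_sum]
  push_cast
  refine Finset.sum_congr rfl fun x _ => ?_
  rw [marg_def, marg_def, div_sub_div_same]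
  rcases le_total (cnt v x) (cnt u x) with h | h
  · have hc : (cnt v x : ℚ) ≤ cnt u x := by exact_mod_cast h
    rw [max_eq_left (div_nonneg (by linarith) hKQ.le), mul_div_cancel₀ _ hKQ.ne',
      Nat.cast_sub h]
  · have hc : (cnt u x : ℚ) ≤ cnt v x := by exact_mod_cast h
    rw [max_eq_right (div_nonpos_of_nonpos_of_nonneg (by linarith) hKQ.le),
      Nat.sub_eq_zero_of_le h]
    simp

lemma lower_bound (u : Fin K → U) (w : Fin K → U) :
    ∑ x : U, (cnt u x - cnt w x) ≤ (Finset.univ.filter fun k => w k ≠ u k).card := by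
  classical
  set s : Finset (Fin K) := Finset.univ.filter fun k => w k ≠ u k with hs
  have hcard : s.card = ∑ x : U, (s.filter fun k => u k = x).card :=
    Finset.card_eq_sum_card_fiberwise (fun a _ => Finset.mem_univ _)
  rw [hcard]
  refine Finset.sum_le_sum fun x _ => ?_
  rw [tsub_le_iff_right]
  have hsub : (Finset.univ.filter fun k => u k = x) ⊆
      (s.filter fun k => u k = x) ∪ (Finset.univ.filter fun k => w k = x) := by
    intro k hk
    simp only [Finset.mem_filter, Finset.mem_univ, true_and] at hk
    by_cases hwk : w k = u k
    · exact Finset.mem_union_right _ (by simp [hwk, hk])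
    · exact Finset.mem_union_left _ (Finset.mem_filter.2 ⟨by simp [hs, hwk], hk⟩)
  calc cnt u x ≤ ((s.filter fun k => u k = x) ∪
        (Finset.univ.filter fun k => w k = x)).card := Finset.card_le_card hsub
    _ ≤ (s.filter fun k => u k = x).card + cnt w x := Finset.card_union_le _ _

omit [Fintype U] in
lemma cnt_update (u : Fin K → U) (k : Fin K) (y z : U) :
    cnt (Function.update u k y) z + (if u k = z then 1 else 0)
      = cnt u z + (if y = z then 1 else 0) := by
  classical
  unfold cnt
  rw [Finset.card_filter, Finset.card_filter,
    ← Finset.sum_erase_add _ _ (Finset.mem_univ k),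
    ← Finset.sum_erase_add _ _ (Finset.mem_univ k)]
  have hsum : ∑ k' ∈ Finset.univ.erase k, (if Function.update u k y k' = z then 1 else 0)
      = ∑ k' ∈ Finset.univ.erase k, (if u k' = z then 1 else 0) :=
    Finset.sum_congr rfl fun k' hk' => by
      rw [Function.update_of_ne (Finset.ne_of_mem_erase hk')]
  rw [hsum, Function.update_self]
  omega

lemma exists_good (v : Fin K → U) :
    ∀ n (u : Fin K → U), (∑ x : U, (cnt u x - cnt v x)) = n →
      ∃ w : Fin K → U, (∀ x, cnt w x = cnt v x) ∧
        (Finset.univ.filter fun k => w k ≠ u k).card ≤ n := by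
  classical
  intro n
  induction n with
  | zero =>
    intro u h
    refine ⟨u, fun x => ?_, by simp⟩
    have hle : ∀ x ∈ (Finset.univ : Finset U), cnt u x ≤ cnt v x := fun x _ => by
      have := Finset.sum_eq_zero_iff.1 h x (Finset.mem_univ x)
      omega
    have hsum : ∑ x : U, cnt u x = ∑ x : U, cnt v x := by
      rw [sum_cnt, sum_cnt]
    exact (Finset.sum_eq_sum_iff_of_le hle).1 hsum x (Finset.mem_univ x)
  | succ n ih =>
    intro u h
    -- find x with cnt u x > cnt v x
    have hx : ∃ x, cnt v x < cnt u x := by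
      by_contra hc
      push_neg at hc
      have : ∑ x : U, (cnt u x - cnt v x) = 0 :=
        Finset.sum_eq_zero fun x _ => Nat.sub_eq_zero_of_le (hc x)
      omega
    obtain ⟨x, hxlt⟩ := hx
    have hy : ∃ y, cnt u y < cnt v y := by
      by_contra hc
      push_neg at hc
      have hsum : ∑ z : U, cnt u z = ∑ z : U, cnt v z := by rw [sum_cnt, sum_cnt]
      have := (Finset.sum_eq_sum_iff_of_le (fun z _ => hc z)).1 hsum.symm x (Finset.mem_univ x)
      omega
    obtain ⟨y, hylt⟩ := hy
    have hxy : x ≠ y := fun hxy => by rw [hxy] at hxlt; omega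
    -- pick k with u k = x
    have hk : ∃ k, u k = x := by
      have : 0 < cnt u x := by omega
      obtain ⟨k, hk⟩ := Finset.card_pos.1 this
      exact ⟨k, (Finset.mem_filter.1 hk).2⟩
    obtain ⟨k, hk⟩ := hk
    set u' := Function.update u k y with hu'
    have hcx : cnt u' x + 1 = cnt u x := by
      have := cnt_update u k y x
      rw [← hu'] at this
      simp [hk, hxy, Ne.symm hxy] at this
      omega
    have hcy : cnt u' y = cnt u y + 1 := by
      have := cnt_update u k y y
      rw [← hu'] at this
      have hne : u k ≠ y := by rw [hk]; exact hxy
      simp [hne] at this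
      omega
    have hcz : ∀ z, z ≠ x → z ≠ y → cnt u' z = cnt u z := fun z hzx hzy => by
      have := cnt_update u k y z
      rw [← hu'] at this
      have h1 : u k ≠ z := by rw [hk]; exact Ne.symm hzx
      have h2 : y ≠ z := Ne.symm hzy
      simp [h1, h2] at this
      omega
    have hterm : ∀ z ∈ Finset.univ.erase x,
        cnt u' z - cnt v z = cnt u z - cnt v z := fun z hz => by
      rcases eq_or_ne z y with rfl | hzy
      · omega
      · rw [hcz z (Finset.ne_of_mem_erase hz) hzy]
    have hsum' : ∑ z : U, (cnt u' z - cnt v z) = n := by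
      rw [← Finset.sum_erase_add _ _ (Finset.mem_univ x)] at h ⊢
      rw [Finset.sum_congr rfl hterm]
      omega
    obtain ⟨w, hw1, hw2⟩ := ih u' hsum'
    refine ⟨w, hw1, ?_⟩
    have hsub : (Finset.univ.filter fun k' => w k' ≠ u k') ⊆
        insert k (Finset.univ.filter fun k' => w k' ≠ u' k') := by
      intro k' hk'
      simp only [Finset.mem_filter, Finset.mem_univ, true_and] at hk'
      rcases eq_or_ne k' k with rfl | hne
      · exact Finset.mem_insert_self _ _
      · refine Finset.mem_insert_of_mem (Finset.mem_filter.2 ⟨Finset.mem_univ _, ?_⟩)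
        rwa [hu', Function.update_of_ne hne]
    calc (Finset.univ.filter fun k' => w k' ≠ u k').card
        ≤ (insert k (Finset.univ.filter fun k' => w k' ≠ u' k')).card :=
          Finset.card_le_card hsub
      _ ≤ (Finset.univ.filter fun k' => w k' ≠ u' k').card + 1 :=
          Finset.card_insert_le _ _
      _ ≤ n + 1 := by omega

end Aux

/-- The minimal number of lies needed to report a vector with the same marginal
as `v` equals `K · d(marg u, marg v)`. -/
theorem stmt1 {U : Type*} [Fintype U] [DecidableEq U] [Nonempty U] {K : ℕ} (hK : 0 < K)
    (u v : Fin K → U) :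
    IsLeast {n : ℚ | ∃ w : Fin K → U, marg w = marg v ∧
        n = ((Finset.univ.filter fun k => w k ≠ u k).card : ℚ)}
      ((K : ℚ) * tv (marg u) (marg v)) := by
  classical
  set N : ℕ := ∑ x : U, (cnt u x - cnt v x) with hN
  have hval : (K : ℚ) * tv (marg u) (marg v) = (N : ℚ) := tv_cnt hK u v
  rw [hval]
  constructor
  · -- membership
    obtain ⟨w, hw1, hw2⟩ := exists_good v N u rfl
    have hmarg : marg w = marg v := funext fun x => by rw [marg_def, marg_def, hw1]
    have hlb : N ≤ (Finset.univ.filter fun k => w k ≠ u k).card := by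
      have := lower_bound u w
      have heq : ∑ x : U, (cnt u x - cnt w x) = N :=
        Finset.sum_congr rfl fun x _ => by rw [hw1]
      omega
    have hcard : (Finset.univ.filter fun k => w k ≠ u k).card = N := le_antisymm hw2 hlb
    exact ⟨w, hmarg, by exact_mod_cast hcard.symm⟩
  · -- lower bound
    rintro n ⟨w, hmarg, rfl⟩
    have hcnt : ∀ x, cnt w x = cnt v x := cnt_eq_of_marg hK hmarg
    have := lower_bound u w
    have heq : ∑ x : U, (cnt u x - cnt w x) = N :=
      Finset.sum_congr rfl fun x _ => by rw [hcnt]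
    have : N ≤ (Finset.univ.filter fun k => w k ≠ u k).card := by omega
    exact_mod_cast this
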